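/- Under the hypotheses of the Liouville formula (V continuous, uniformly Lipschitz in space on [0,ε], with continuous spatial derivative D_xV, flow T_t whose spatial derivative M(t) = D_X T_t(X) solves the variational equation M'(t) = D_xV(t,T_t(X)) ∘ M(t), M(0) = I), the Jacobian J_t(X) := det(D_X T_t(X)) satisfies J_t(X) = exp(∫₀ᵗ (div V)(s, T_s(X)) ds) for all t ∈ [0,ε] and X ∈ ℝ^N; in particular J_t(X) > 0 for every t ∈ [0,ε] and every X ∈ ℝ^N. -/

import Mathlib

open Set
open scoped Matrix

namespace JacobianLiouvilleAux

variable {n : ℕ}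

lemma det_updateColumn_expand (M : Matrix (Fin n) (Fin n) ℝ) (i : Fin n) (c : Fin n → ℝ) :
    (M.updateCol i c).det =
      ∑ σ : Equiv.Perm (Fin n), ((Equiv.Perm.sign σ : ℤ) : ℝ) *
        (c (σ i) * ∏ j ∈ Finset.univ.erase i, M (σ j) j) := by
  rw [Matrix.det_apply']
  refine Finset.sum_congr rfl fun σ _ => ?_
  congr 1
  rw [← Finset.mul_prod_erase Finset.univ _ (Finset.mem_univ i)]
  congr 1
  · simp [Matrix.updateCol_apply]
  · exact Finset.prod_congr rfl fun j hj => by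
      simp [Matrix.updateCol_apply, Finset.ne_of_mem_erase hj]

lemma sum_det_updateColumn (a M : Matrix (Fin n) (Fin n) ℝ) :
    ∑ i, (M.updateCol i (fun k => (a * M) k i)).det = a.trace * M.det := by
  have h1 : ∀ i : Fin n, (M.updateCol i fun k => (a * M) k i).det
      = (M.adjugate *ᵥ fun k => (a * M) k i) i := by
    intro i
    rw [← Matrix.cramer_eq_adjugate_mulVec, Matrix.cramer_apply]
  calc ∑ i, (M.updateCol i fun k => (a * M) k i).det
      = ∑ i, ∑ j, M.adjugate i j * (a * M) j i := by
        simp only [h1, Matrix.mulVec, dotProduct]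
    _ = (M.adjugate * (a * M)).trace := by
        simp [Matrix.trace, Matrix.diag, Matrix.mul_apply]
    _ = ((a * M) * M.adjugate).trace := (Matrix.trace_mul_comm _ _).symm
    _ = (a * (M * M.adjugate)).trace := by rw [Matrix.mul_assoc]
    _ = a.trace * M.det := by
        rw [Matrix.mul_adjugate, Matrix.mul_smul, Matrix.mul_one, Matrix.trace_smul]
        simp [mul_comm]

lemma hasDerivWithinAt_det {m : ℝ → Matrix (Fin n) (Fin n) ℝ}
    {m' : Matrix (Fin n) (Fin n) ℝ} {s : Set ℝ} {t : ℝ}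
    (h : ∀ i j, HasDerivWithinAt (fun u => m u i j) (m' i j) s t) :
    HasDerivWithinAt (fun u => (m u).det)
      (∑ i, ((m t).updateCol i (fun k => m' k i)).det) s t := by
  have key : ∀ σ : Equiv.Perm (Fin n),
      HasDerivWithinAt (fun u => ((Equiv.Perm.sign σ : ℤ) : ℝ) * ∏ i, m u (σ i) i)
        (((Equiv.Perm.sign σ : ℤ) : ℝ) *
          ∑ i, (∏ j ∈ Finset.univ.erase i, m t (σ j) j) • m' (σ i) i) s t := by
    intro σ
    exact (HasDerivWithinAt.fun_finset_prod fun i _ => h (σ i) i).const_mul _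
  have hsum := HasDerivWithinAt.fun_sum (fun σ (_ : σ ∈ Finset.univ) => key σ)
  have e1 : (fun u => (m u).det) = fun u => ∑ σ : Equiv.Perm (Fin n),
      ((Equiv.Perm.sign σ : ℤ) : ℝ) * ∏ i, m u (σ i) i := by
    funext u; exact Matrix.det_apply' _
  rw [e1]
  refine hsum.congr_deriv (Eq.symm ?_)
  simp only [det_updateColumn_expand, smul_eq_mul]
  rw [Finset.sum_comm]
  refine Finset.sum_congr rfl fun σ _ => ?_
  rw [Finset.mul_sum]
  exact Finset.sum_congr rfl fun i _ => by ring

lemma ode_exp {ε : ℝ} {f g : ℝ → ℝ}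
    (hf0 : f 0 = 1)
    (hg : ContinuousOn g (Icc 0 ε))
    (hf : ∀ t ∈ Icc (0:ℝ) ε, HasDerivWithinAt f (g t * f t) (Icc 0 ε) t) :
    ∀ t ∈ Icc (0:ℝ) ε, f t = Real.exp (∫ s in (0:ℝ)..t, g s) := by
  set G : ℝ → ℝ := fun u => ∫ s in (0:ℝ)..u, g s with hG
  set F : ℝ → ℝ := fun u => f u * Real.exp (-G u) with hF
  have hfcont : ContinuousOn f (Icc 0 ε) := fun t ht => (hf t ht).continuousWithinAt
  intro t ht
  have hεpos : (0:ℝ) ≤ ε := ht.1.trans ht.2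
  have hGcont : ContinuousOn G (Icc 0 ε) := by
    have hint : IntervalIntegrable g MeasureTheory.volume 0 ε := by
      apply ContinuousOn.intervalIntegrable
      rwa [uIcc_of_le hεpos]
    have := intervalIntegral.continuousOn_primitive_interval' hint
      (by rw [uIcc_of_le hεpos]; exact ⟨le_refl 0, hεpos⟩)
    rwa [uIcc_of_le hεpos] at this
  have hFcont : ContinuousOn F (Icc 0 ε) :=
    hfcont.mul (Real.continuous_exp.comp_continuousOn hGcont.neg)
  have hFderiv : ∀ x ∈ Ico (0:ℝ) ε, HasDerivWithinAt F 0 (Ici x) x := by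
    intro x hx
    have hxIcc : x ∈ Icc (0:ℝ) ε := ⟨hx.1, hx.2.le⟩
    have hmem : Icc (0:ℝ) ε ∈ nhdsWithin x (Ici x) := by
      rw [mem_nhdsWithin]
      exact ⟨Iio ε, isOpen_Iio, hx.2, fun y hy => ⟨hx.1.trans hy.2, hy.1.le⟩⟩
    have hfx : HasDerivWithinAt f (g x * f x) (Ici x) x :=
      (hf x hxIcc).mono_of_mem_nhdsWithin hmem
    have hgint : IntervalIntegrable g MeasureTheory.volume 0 x := by
      apply ContinuousOn.intervalIntegrable
      rw [uIcc_of_le hx.1]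
      exact hg.mono (Icc_subset_Icc le_rfl hx.2.le)
    have hmem' : Icc (0:ℝ) ε ∈ nhdsWithin x (Ioi x) := by
      rw [mem_nhdsWithin]
      exact ⟨Iio ε, isOpen_Iio, hx.2, fun y hy => ⟨hx.1.trans hy.2.le, hy.1.le⟩⟩
    have hmeas : StronglyMeasurableAtFilter g (nhdsWithin x (Ioi x)) :=
      ⟨Icc 0 ε, hmem', hg.aestronglyMeasurable measurableSet_Icc⟩
    have hgx : ContinuousWithinAt g (Ioi x) x :=
      (hg x hxIcc).mono_of_mem_nhdsWithin hmem'
    have hGx : HasDerivWithinAt G (g x) (Ici x) x :=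
      intervalIntegral.integral_hasDerivWithinAt_right hgint hmeas hgx
    have hE : HasDerivWithinAt (fun u => Real.exp (-G u)) (Real.exp (-G x) * (-g x))
        (Ici x) x := hGx.neg.exp
    have := hfx.mul hE
    refine this.congr_deriv ?_
    ring
  have hconst := constant_of_has_deriv_right_zero hFcont hFderiv t ht
  have hF0 : F 0 = 1 := by
    simp [hF, hG, intervalIntegral.integral_same, hf0]
  rw [hF0] at hconst
  have : f t * Real.exp (-G t) = 1 := hconst
  rw [Real.exp_neg] at this
  field_simp at this
  exact this

end JacobianLiouvilleAux
open JacobianLiouvilleAux in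
/-- Liouville's formula in integrated form: the Jacobian
`J_t(X) = det (D_X T_t(X))` of the flow `T` of a time-dependent vector field
`V` satisfies `J_t(X) = exp (∫₀ᵗ (div V)(s, T_s(X)) ds)`; in particular
`J_t(X) > 0` for every `t ∈ [0, ε]` and every `X`. -/
theorem jacobian_exp_formula_pos
    (N : ℕ) (hN : 1 ≤ N) (ε : ℝ) (hε : 0 < ε)
    (V : ℝ → EuclideanSpace ℝ (Fin N) → EuclideanSpace ℝ (Fin N))
    (hVcont : Continuous fun p : ℝ × EuclideanSpace ℝ (Fin N) => V p.1 p.2)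
    (L : ℝ) (hL : 0 ≤ L)
    (hVlip : ∀ t ∈ Icc (0 : ℝ) ε, ∀ x y : EuclideanSpace ℝ (Fin N),
      ‖V t x - V t y‖ ≤ L * ‖x - y‖)
    (hVC1 : ∀ t : ℝ, ContDiff ℝ 1 (V t))
    (hDVcont : ContinuousOn
      (fun p : ℝ × EuclideanSpace ℝ (Fin N) => fderiv ℝ (V p.1) p.2)
      (Icc (0 : ℝ) ε ×ˢ (univ : Set (EuclideanSpace ℝ (Fin N)))))
    (T : ℝ → EuclideanSpace ℝ (Fin N) → EuclideanSpace ℝ (Fin N))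
    (hTflow : ∀ X : EuclideanSpace ℝ (Fin N), T 0 X = X ∧
      ∀ t ∈ Icc (0 : ℝ) ε,
        HasDerivWithinAt (fun s => T s X) (V t (T t X)) (Icc (0 : ℝ) ε) t)
    (hTdiff : ∀ t ∈ Icc (0 : ℝ) ε, Differentiable ℝ (T t))
    (hvar : ∀ X : EuclideanSpace ℝ (Fin N),
      fderiv ℝ (T 0) X = ContinuousLinearMap.id ℝ (EuclideanSpace ℝ (Fin N)) ∧
      ∀ t ∈ Icc (0 : ℝ) ε,
        HasDerivWithinAt (fun s => fderiv ℝ (T s) X)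
          ((fderiv ℝ (V t) (T t X)).comp (fderiv ℝ (T t) X)) (Icc (0 : ℝ) ε) t)
    (J : ℝ → EuclideanSpace ℝ (Fin N) → ℝ)
    (hJ : ∀ t X, J t X = LinearMap.det
      (fderiv ℝ (T t) X :
        EuclideanSpace ℝ (Fin N) →ₗ[ℝ] EuclideanSpace ℝ (Fin N))) :
    ∀ t ∈ Icc (0 : ℝ) ε, ∀ X : EuclideanSpace ℝ (Fin N),
      J t X = Real.exp (∫ s in (0 : ℝ)..t,
          LinearMap.trace ℝ (EuclideanSpace ℝ (Fin N))
            (fderiv ℝ (V s) (T s X) :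
              EuclideanSpace ℝ (Fin N) →ₗ[ℝ] EuclideanSpace ℝ (Fin N))) ∧
      0 < J t X := by
  classical
  intro t ht X
  let b : Module.Basis (Fin N) ℝ (EuclideanSpace ℝ (Fin N)) :=
    (EuclideanSpace.basisFun (Fin N) ℝ).toBasis
  set m : ℝ → Matrix (Fin N) (Fin N) ℝ :=
    fun s => LinearMap.toMatrix b b (fderiv ℝ (T s) X) with hm
  set a : ℝ → Matrix (Fin N) (Fin N) ℝ :=
    fun s => LinearMap.toMatrix b b (fderiv ℝ (V s) (T s X)) with ha
  set g : ℝ → ℝ := fun s => LinearMap.trace ℝ (EuclideanSpace ℝ (Fin N))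
    (fderiv ℝ (V s) (T s X) :
      EuclideanSpace ℝ (Fin N) →ₗ[ℝ] EuclideanSpace ℝ (Fin N)) with hgdef
  set f : ℝ → ℝ := fun s => (m s).det with hfdef
  -- J in terms of f
  have hfJ : ∀ s, J s X = f s := by
    intro s
    rw [hJ, hfdef]
    exact (LinearMap.det_toMatrix b _).symm
  -- entrywise derivative
  have entry_deriv : ∀ s ∈ Icc (0:ℝ) ε, ∀ i j,
      HasDerivWithinAt (fun u => m u i j) ((a s * m s) i j) (Icc (0:ℝ) ε) s := by
    intro s hs i j
    let φ : (EuclideanSpace ℝ (Fin N) →L[ℝ] EuclideanSpace ℝ (Fin N)) →ₗ[ℝ] ℝ :=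
      { toFun := fun W => LinearMap.toMatrix b b (W : EuclideanSpace ℝ (Fin N) →ₗ[ℝ] EuclideanSpace ℝ (Fin N)) i j
        map_add' := fun W₁ W₂ => by
          simp only [ContinuousLinearMap.coe_add, map_add, Matrix.add_apply]
        map_smul' := fun c W => by
          simp only [ContinuousLinearMap.coe_smul, map_smul, Matrix.smul_apply,
            smul_eq_mul, RingHom.id_apply] }
    have hφ : HasFDerivAt φ φ.toContinuousLinearMap (fderiv ℝ (T s) X) := by
      have := φ.toContinuousLinearMap.hasFDerivAt (x := fderiv ℝ (T s) X)
      simpa using this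
    have hcomp := hφ.comp_hasDerivWithinAt s ((hvar X).2 s hs)
    have heq : φ ((fderiv ℝ (V s) (T s X)).comp (fderiv ℝ (T s) X)) = (a s * m s) i j := by
      show LinearMap.toMatrix b b
        (((fderiv ℝ (V s) (T s X)).comp (fderiv ℝ (T s) X) : EuclideanSpace ℝ (Fin N) →L[ℝ] EuclideanSpace ℝ (Fin N)) : EuclideanSpace ℝ (Fin N) →ₗ[ℝ] EuclideanSpace ℝ (Fin N)) i j = _
      rw [ContinuousLinearMap.toLinearMap_comp, LinearMap.toMatrix_comp b b b]
    have : HasDerivWithinAt (fun u => φ (fderiv ℝ (T u) X))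
        (φ ((fderiv ℝ (V s) (T s X)).comp (fderiv ℝ (T s) X))) (Icc (0:ℝ) ε) s := by
      exact hcomp
    rw [heq] at this
    exact this
  -- derivative of f
  have hf_deriv : ∀ s ∈ Icc (0:ℝ) ε, HasDerivWithinAt f (g s * f s) (Icc (0:ℝ) ε) s := by
    intro s hs
    have h1 := hasDerivWithinAt_det (m := m) (m' := a s * m s)
      (fun i j => entry_deriv s hs i j)
    rw [sum_det_updateColumn] at h1
    have htr : g s = (a s).trace := LinearMap.trace_eq_matrix_trace ℝ b _
    rw [hgdef] at htr ⊢
    rw [htr]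
    exact h1
  -- initial condition
  have hf0 : f 0 = 1 := by
    rw [hfdef]
    simp only [hm]
    rw [(hvar X).1, ContinuousLinearMap.coe_id, LinearMap.toMatrix_id, Matrix.det_one]
  -- continuity of g
  have hTX : ContinuousOn (fun s => T s X) (Icc (0:ℝ) ε) :=
    fun s hs => ((hTflow X).2 s hs).continuousWithinAt
  have hA : ContinuousOn (fun s => fderiv ℝ (V s) (T s X)) (Icc (0:ℝ) ε) := by
    have hpair : ContinuousOn (fun s => ((s, T s X) : ℝ × EuclideanSpace ℝ (Fin N))) (Icc (0:ℝ) ε) :=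
      continuousOn_id.prodMk hTX
    exact hDVcont.comp hpair (fun s hs => ⟨hs, mem_univ _⟩)
  have hgc : ContinuousOn g (Icc (0:ℝ) ε) := by
    let τ : (EuclideanSpace ℝ (Fin N) →L[ℝ] EuclideanSpace ℝ (Fin N)) →ₗ[ℝ] ℝ :=
      (LinearMap.trace ℝ (EuclideanSpace ℝ (Fin N))).comp (ContinuousLinearMap.coeLM ℝ)
    have : ContinuousOn (fun s => τ (fderiv ℝ (V s) (T s X))) (Icc (0:ℝ) ε) :=
      τ.continuous_of_finiteDimensional.comp_continuousOn hA
    exact this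
  have key := ode_exp hf0 hgc hf_deriv t ht
  refine ⟨?_, ?_⟩
  · rw [hfJ t, key]
  · rw [hfJ t, key]
    exact Real.exp_pos _
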